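/- For all real ω, ∫_{-∞}^{∞} e^{iωs}/√(cosh s) ds = Γ(1/4 + iω/2)·Γ(1/4 - iω/2)/√(2π). -/

import Mathlib

open Complex Real MeasureTheory Set

noncomputable def Fsub (x : ℝ) : ℝ := (Real.log x - Real.log (1 - x)) / 2

lemma Fsub_hasDerivAt {x : ℝ} (hx : x ∈ Ioo (0:ℝ) 1) :
    HasDerivAt Fsub (1 / (2 * x * (1 - x))) x := by
  obtain ⟨h0, h1⟩ := hx
  have h1' : (0:ℝ) < 1 - x := by linarith
  have hd : HasDerivAt (fun y => Real.log (1 - y)) ((1 - x)⁻¹ * (-1)) x := by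
    have := (Real.hasDerivAt_log h1'.ne').comp x ((hasDerivAt_id x).const_sub 1)
    simpa [Function.comp_def] using this
  have := ((Real.hasDerivAt_log h0.ne').sub hd).div_const 2
  refine this.congr_deriv ?_
  field_simp
  ring

lemma Fsub_injOn : InjOn Fsub (Ioo (0:ℝ) 1) := by
  intro a ha b hb h
  obtain ⟨ha0, ha1⟩ := ha
  obtain ⟨hb0, hb1⟩ := hb
  have ha1' : (0:ℝ) < 1 - a := by linarith
  have hb1' : (0:ℝ) < 1 - b := by linarith
  have h2 : Real.log (a / (1 - a)) = Real.log (b / (1 - b)) := by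
    rw [Real.log_div ha0.ne' ha1'.ne', Real.log_div hb0.ne' hb1'.ne']
    have := congrArg (· * 2) h
    simpa [Fsub, div_mul_cancel₀] using this
  have h3 : a / (1 - a) = b / (1 - b) := by
    have := congrArg Real.exp h2
    rwa [Real.exp_log (by positivity), Real.exp_log (by positivity)] at this
  field_simp at h3
  nlinarith

lemma Fsub_image : Fsub '' (Ioo (0:ℝ) 1) = univ := by
  apply eq_univ_of_forall
  intro y
  have he : (0:ℝ) < Real.exp (-(2*y)) := Real.exp_pos _
  refine ⟨1 / (1 + Real.exp (-(2*y))), ⟨by positivity, ?_⟩, ?_⟩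
  · rw [div_lt_one (by positivity)]; linarith
  · have hx0 : (0:ℝ) < 1 / (1 + Real.exp (-(2*y))) := by positivity
    have hx1 : 1 - 1 / (1 + Real.exp (-(2*y))) = Real.exp (-(2*y)) / (1 + Real.exp (-(2*y))) := by
      field_simp
      ring
    unfold Fsub
    rw [hx1, ← Real.log_div (by positivity) (by positivity)]
    have : 1 / (1 + Real.exp (-(2*y))) / (Real.exp (-(2*y)) / (1 + Real.exp (-(2*y)))) =
        Real.exp (2*y) := by
      rw [div_div_div_eq, one_mul, div_eq_iff (by positivity)]
      have : rexp (2*y) * rexp (-(2*y)) = 1 := by rw [← Real.exp_add]; simp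
      nlinarith [Real.exp_pos (-(2*y))]
    rw [this, Real.log_exp]
    ring

lemma key (ω : ℝ) {x : ℝ} (hx : x ∈ Ioo (0:ℝ) 1) :
    |1 / (2 * x * (1 - x))| • (Complex.exp (Complex.I * ((ω * Fsub x : ℝ) : ℂ)) /
        ((Real.sqrt (Real.cosh (Fsub x)) : ℝ) : ℂ)) =
      (Real.sqrt 2)⁻¹ •
        ((x:ℂ) ^ (1/4 + Complex.I * ω / 2 - 1) * (1 - (x:ℂ)) ^ (1/4 - Complex.I * ω / 2 - 1)) := by
  obtain ⟨h0, h1⟩ := hx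
  have h1' : (0:ℝ) < 1 - x := by linarith
  set L := Real.log x with hL
  set M := Real.log (1 - x) with hM
  have hxL : x = rexp L := (Real.exp_log h0).symm
  have h1M : 1 - x = rexp M := (Real.exp_log h1').symm
  have e1 : rexp ((L - M) / 2) = x * rexp (-((L + M) / 2)) := by
    rw [hxL, ← Real.exp_add]; congr 1; ring
  have e2 : rexp (-((L - M) / 2)) = (1 - x) * rexp (-((L + M) / 2)) := by
    rw [h1M, ← Real.exp_add]; congr 1; ring
  have hcosh : Real.cosh (Fsub x) = rexp (-((L + M) / 2)) / 2 := by
    rw [Real.cosh_eq]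
    show (rexp ((L - M)/2) + rexp (-((L - M)/2))) / 2 = _
    rw [e1, e2]; ring
  have hsq : Real.sqrt (Real.cosh (Fsub x)) = rexp (-((L + M) / 4)) / Real.sqrt 2 := by
    rw [hcosh, Real.sqrt_div (Real.exp_pos _).le,
      show rexp (-((L + M)/2)) = (rexp (-((L + M)/4)))^2 by rw [sq, ← Real.exp_add]; congr 1; ring,
      Real.sqrt_sq (Real.exp_pos _).le]
  have habs : |1 / (2 * x * (1 - x))| = rexp (-(L + M)) / 2 := by
    rw [abs_of_pos (by positivity),
      show rexp (-(L+M)) = x⁻¹ * (1-x)⁻¹ by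
        rw [neg_add, Real.exp_add, Real.exp_neg, Real.exp_neg, Real.exp_log h0,
          Real.exp_log h1']]
    field_simp
  have hxC : (x : ℂ) = Complex.exp (L : ℂ) := by
    rw [hxL]; exact_mod_cast (Complex.ofReal_exp L)
  have h1C : (1 : ℂ) - (x : ℂ) = Complex.exp (M : ℂ) := by
    rw [show (1:ℂ) - (x:ℂ) = ((1 - x : ℝ) : ℂ) by push_cast; ring, h1M]
    exact_mod_cast (Complex.ofReal_exp M)
  have hcp1 : (x:ℂ) ^ (1/4 + Complex.I * ω / 2 - 1) =
      Complex.exp ((L : ℂ) * (1/4 + Complex.I * ω / 2 - 1)) := by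
    rw [Complex.cpow_def_of_ne_zero (Complex.ofReal_ne_zero.mpr h0.ne'),
      ← Complex.ofReal_log h0.le]
  have hcp2 : (1 - (x:ℂ)) ^ (1/4 - Complex.I * ω / 2 - 1) =
      Complex.exp ((M : ℂ) * (1/4 - Complex.I * ω / 2 - 1)) := by
    rw [show (1:ℂ) - (x:ℂ) = ((1 - x : ℝ) : ℂ) by push_cast; ring,
      Complex.cpow_def_of_ne_zero (Complex.ofReal_ne_zero.mpr h1'.ne'),
      ← Complex.ofReal_log h1'.le]
  have hF : Fsub x = (L - M) / 2 := rfl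
  have hs2 : ((Real.sqrt 2 : ℝ) : ℂ) ≠ 0 :=
    Complex.ofReal_ne_zero.mpr (Real.sqrt_pos.mpr two_pos).ne'
  rw [habs, hsq, hcp1, hcp2, hF]
  rw [Complex.real_smul, Complex.real_smul]
  push_cast [Complex.ofReal_exp]
  rw [Complex.exp_neg]
  have hs22 : ((Real.sqrt 2 : ℝ) : ℂ) * ((Real.sqrt 2 : ℝ) : ℂ) = 2 := by
    rw [← Complex.ofReal_mul, Real.mul_self_sqrt two_pos.le]; norm_num
  field_simp [Complex.exp_ne_zero]
  have h4 : ∀ a b c d : ℂ, cexp a * 2 * cexp b * cexp c * cexp d = 2 * cexp (a + b + c + d) := by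
    intros; simp only [Complex.exp_add]; ring
  rw [h4, sq, hs22, mul_comm]
  congr 2
  ring

theorem stmt_15 (ω : ℝ) :
    ∫ s : ℝ, Complex.exp (Complex.I * (ω * s : ℝ)) /
        ((Real.sqrt (Real.cosh s) : ℝ) : ℂ) =
      Complex.Gamma (1 / 4 + Complex.I * ω / 2) *
        Complex.Gamma (1 / 4 - Complex.I * ω / 2) /
        ((Real.sqrt (2 * Real.pi) : ℝ) : ℂ) := by
  set u : ℂ := 1 / 4 + Complex.I * ω / 2 with hu
  set v : ℂ := 1 / 4 - Complex.I * ω / 2 with hv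
  have hure : 0 < u.re := by
    simp [hu, Complex.add_re, Complex.div_re, Complex.mul_re]
  have hvre : 0 < v.re := by
    simp [hv, Complex.sub_re, Complex.div_re, Complex.mul_re]
  have step1 : (∫ s : ℝ, Complex.exp (Complex.I * (ω * s : ℝ)) /
      ((Real.sqrt (Real.cosh s) : ℝ) : ℂ)) =
      ∫ x in Ioo (0:ℝ) 1, |1 / (2 * x * (1 - x))| •
        (Complex.exp (Complex.I * ((ω * Fsub x : ℝ) : ℂ)) /
          ((Real.sqrt (Real.cosh (Fsub x)) : ℝ) : ℂ)) := by
    rw [← MeasureTheory.setIntegral_univ, ← Fsub_image,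
      integral_image_eq_integral_abs_deriv_smul measurableSet_Ioo
        (fun x hx => (Fsub_hasDerivAt hx).hasDerivWithinAt) Fsub_injOn]
  rw [step1, MeasureTheory.setIntegral_congr_fun measurableSet_Ioo (fun x hx => key ω hx),
    integral_smul]
  have hbeta : Complex.betaIntegral u v =
      ∫ x in Ioo (0:ℝ) 1, (x:ℂ) ^ (u - 1) * (1 - (x:ℂ)) ^ (v - 1) := by
    rw [Complex.betaIntegral, intervalIntegral.integral_of_le zero_le_one,
      MeasureTheory.integral_Ioc_eq_integral_Ioo]
  rw [← hbeta]
  have hG : Complex.Gamma u * Complex.Gamma v =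
      ((Real.sqrt Real.pi : ℝ) : ℂ) * Complex.betaIntegral u v := by
    rw [Complex.Gamma_mul_Gamma_eq_betaIntegral hure hvre,
      show u + v = 1 / 2 by rw [hu, hv]; ring, Complex.Gamma_one_half_eq]
    congr 1
    rw [Real.sqrt_eq_rpow, Complex.ofReal_cpow Real.pi_pos.le]
    norm_num
  rw [hG, Real.sqrt_mul two_pos.le]
  have h2 : Real.sqrt 2 ≠ 0 := (Real.sqrt_pos.mpr two_pos).ne'
  have hp : Real.sqrt Real.pi ≠ 0 := (Real.sqrt_pos.mpr Real.pi_pos).ne'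
  rw [Complex.real_smul, Complex.ofReal_inv, Complex.ofReal_mul,
    mul_comm ((Real.sqrt Real.pi : ℝ):ℂ) (Complex.betaIntegral u v),
    mul_div_mul_right _ _ (Complex.ofReal_ne_zero.mpr hp), inv_mul_eq_div]
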